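/- Let (X,d,μ) be a metric measure space with μ Borel regular, and let x = (x¹,…,x^N) be an N-tuple of real-valued Lipschitz functions on X. Then Ind(x), the set of points of X at which x is not dependent to first order, is a measurable subset of X. -/

import Mathlib

open Metric MeasureTheory Filter Set
open scoped NNReal ENNReal

/-- The variation of `f` on the ball `B(x,r)`: `sup { |f y - f x| / r : y ∈ B(x,r) }`. -/
noncomputable def varBall {X : Type*} [MetricSpace X] (f : X → ℝ) (x : X) (r : ℝ) : ℝ :=
  sSup ((fun y => |f y - f x| / r) '' Metric.ball x r)

/-- Lower pointwise Lipschitz constant `lip_x f`. -/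
noncomputable def lipLow {X : Type*} [MetricSpace X] (f : X → ℝ) (x : X) : ℝ :=
  Filter.liminf (fun r => varBall f x r) (nhdsWithin 0 (Set.Ioi (0:ℝ)))

/-- Upper pointwise Lipschitz constant `Lip_x f`. -/
noncomputable def lipUp {X : Type*} [MetricSpace X] (f : X → ℝ) (x : X) : ℝ :=
  Filter.limsup (fun r => varBall f x r) (nhdsWithin 0 (Set.Ioi (0:ℝ)))

/-- `f` is a real-valued Lipschitz function. -/
def IsLip {X : Type*} [MetricSpace X] (f : X → ℝ) : Prop := ∃ K : ℝ≥0, LipschitzWith K f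

/-- `μ` is doubling with constant `C`. -/
def DoublingWith {X : Type*} [MetricSpace X] [MeasurableSpace X] (μ : Measure X) (C : ℝ≥0) :
    Prop :=
  ∀ (x : X) (r : ℝ), 0 < r → μ (Metric.ball x (2 * r)) ≤ (C : ℝ≥0∞) * μ (Metric.ball x r)

/-- `(X, μ)` admits a `p`-Poincaré inequality with constant `L`. -/
def PoincareIneq {X : Type*} [MetricSpace X] [MeasurableSpace X] (μ : Measure X) (p L : ℝ) :
    Prop :=
  (∀ (x : X) (r : ℝ), 0 < r → 0 < μ (Metric.ball x r) ∧ μ (Metric.ball x r) < ⊤) ∧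
  ∀ f : X → ℝ, IsLip f → ∀ (x : X) (r : ℝ), 0 < r →
    ⨍ y in Metric.ball x r, |f y - ⨍ z in Metric.ball x r, f z ∂μ| ∂μ ≤
      L * r * (⨍ z in Metric.ball x (L * r), (lipLow f z) ^ p ∂μ) ^ (1 / p)

/-- An `N`-tuple of functions is dependent to first order at `x`. -/
def DependentAt {X : Type*} [MetricSpace X] {N : ℕ} (f : Fin N → X → ℝ) (x : X) : Prop :=
  ∃ l : Fin N → ℝ, l ≠ 0 ∧ lipUp (fun y => ∑ i, l i * f i y) x = 0

/-- A measurable differentiable structure of dimension at most `N₀`. -/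
def HasMDS {X : Type*} [MetricSpace X] [MeasurableSpace X] (μ : Measure X) (N₀ : ℕ) : Prop :=
  ∃ (ι : Type) (_ : Countable ι) (U : ι → Set X) (N : ι → ℕ)
      (φ : (i : ι) → Fin (N i) → X → ℝ),
    (∀ i, MeasurableSet (U i) ∧ 0 < μ (U i)) ∧
    μ (Set.univ \ ⋃ i, U i) = 0 ∧
    (∀ i, N i ≤ N₀) ∧
    (∀ i k, IsLip (φ i k)) ∧
    (∀ f : X → ℝ, IsLip f → ∀ i, ∃ df : X → (Fin (N i) → ℝ),
      Measurable df ∧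
      (∀ᵐ x ∂(μ.restrict (U i)),
        lipUp (fun y => f y - ∑ k, df x k * φ i k y) x = 0) ∧
      ∀ dg : X → (Fin (N i) → ℝ), Measurable dg →
        (∀ᵐ x ∂(μ.restrict (U i)),
          lipUp (fun y => f y - ∑ k, dg x k * φ i k y) x = 0) →
        (∀ᵐ x ∂(μ.restrict (U i)), df x = dg x))

section Aux

variable {X : Type*} [MetricSpace X]

lemma varBall_nonneg (g : X → ℝ) (x : X) (r : ℝ) : 0 ≤ varBall g x r := by
  apply Real.sSup_nonneg
  rintro v ⟨y, hy, rfl⟩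
  have hr : 0 < r := lt_of_le_of_lt dist_nonneg (Metric.mem_ball.mp hy)
  positivity

lemma varBall_le {g : X → ℝ} {M : ℝ} (hM0 : 0 ≤ M)
    (hg : ∀ y z, |g y - g z| ≤ M * dist y z) (x : X) (r : ℝ) :
    varBall g x r ≤ M := by
  apply Real.sSup_le _ hM0
  rintro v ⟨y, hy, rfl⟩
  rw [Metric.mem_ball] at hy
  have hr : 0 < r := lt_of_le_of_lt dist_nonneg hy
  rw [div_le_iff₀ hr]
  calc |g y - g x| ≤ M * dist y x := hg y x
    _ ≤ M * r := mul_le_mul_of_nonneg_left hy.le hM0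

lemma le_varBall {g : X → ℝ} {M : ℝ} (hM0 : 0 ≤ M)
    (hg : ∀ y z, |g y - g z| ≤ M * dist y z) {x y : X} {r : ℝ}
    (hy : y ∈ Metric.ball x r) :
    |g y - g x| / r ≤ varBall g x r := by
  refine le_csSup ⟨M, ?_⟩ ⟨y, hy, rfl⟩
  rintro v ⟨z, hz, rfl⟩
  rw [Metric.mem_ball] at hz
  have hr : 0 < r := lt_of_le_of_lt dist_nonneg hz
  rw [div_le_iff₀ hr]
  calc |g z - g x| ≤ M * dist z x := hg z x
    _ ≤ M * r := mul_le_mul_of_nonneg_left hz.le hM0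

lemma lipUp_bdd {g : X → ℝ} {M : ℝ} (hM0 : 0 ≤ M)
    (hg : ∀ y z, |g y - g z| ≤ M * dist y z) (x : X) :
    IsBoundedUnder (· ≤ ·) (nhdsWithin 0 (Set.Ioi (0:ℝ))) (fun r => varBall g x r) :=
  isBoundedUnder_of ⟨M, fun r => varBall_le hM0 hg x r⟩

lemma lipUp_nonneg {g : X → ℝ} {M : ℝ} (hM0 : 0 ≤ M)
    (hg : ∀ y z, |g y - g z| ≤ M * dist y z) (x : X) :
    0 ≤ lipUp g x :=
  le_limsup_of_frequently_le (Frequently.of_forall fun r => varBall_nonneg g x r)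
    (lipUp_bdd hM0 hg x)

lemma lipUp_le {g : X → ℝ} {x : X} {a : ℝ}
    (h : ∀ᶠ r in nhdsWithin 0 (Set.Ioi (0:ℝ)), varBall g x r ≤ a) :
    lipUp g x ≤ a :=
  limsup_le_of_le (isCoboundedUnder_le_of_le _ fun r => varBall_nonneg g x r) h

lemma varBall_le_of_rat {g : X → ℝ} {M : ℝ} (hM0 : 0 ≤ M)
    (hg : ∀ y z, |g y - g z| ≤ M * dist y z) {x : X} {a ε : ℝ} (ha : 0 ≤ a)
    (h : ∀ q : ℚ, 0 < (q:ℝ) → (q:ℝ) < ε → varBall g x (q:ℝ) ≤ a)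
    {r : ℝ} (hr : 0 < r) (hrε : r < ε) : varBall g x r ≤ a := by
  apply Real.sSup_le _ ha
  rintro v ⟨y, hy, rfl⟩
  rw [Metric.mem_ball] at hy
  rcases eq_or_lt_of_le (dist_nonneg : (0:ℝ) ≤ dist y x) with hd | hd
  · have hyx : y = x := dist_eq_zero.mp hd.symm
    simp [hyx, ha]
  · obtain ⟨q, hq1, hq2⟩ := exists_rat_btwn hy
    have hq0 : 0 < (q:ℝ) := lt_trans hd hq1
    calc |g y - g x| / r ≤ |g y - g x| / (q:ℝ) := by gcongr
      _ ≤ varBall g x (q:ℝ) := le_varBall hM0 hg (Metric.mem_ball.mpr hq1)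
      _ ≤ a := h q hq0 (lt_trans hq2 hrε)

lemma lipUp_lt_iff {g : X → ℝ} {M : ℝ} (hM0 : 0 ≤ M)
    (hg : ∀ y z, |g y - g z| ≤ M * dist y z) (x : X) {c : ℝ} :
    lipUp g x < c ↔ ∃ a : ℚ, 0 ≤ (a:ℝ) ∧ (a:ℝ) < c ∧ ∃ ε : ℚ, 0 < (ε:ℝ) ∧
      ∀ q : ℚ, 0 < (q:ℝ) → (q:ℝ) < (ε:ℝ) → varBall g x (q:ℝ) ≤ (a:ℝ) := by
  constructor
  · intro h
    have hL0 : 0 ≤ lipUp g x := lipUp_nonneg hM0 hg x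
    have hmid1 : lipUp g x < (lipUp g x + c)/2 := by linarith
    have hmid2 : (lipUp g x + c)/2 < c := by linarith
    have hev : ∀ᶠ r in nhdsWithin 0 (Set.Ioi (0:ℝ)),
        varBall g x r < (lipUp g x + c)/2 :=
      eventually_lt_of_limsup_lt hmid1 (lipUp_bdd hM0 hg x)
    rw [(nhdsGT_basis_of_exists_gt ⟨1, one_pos⟩).eventually_iff] at hev
    obtain ⟨ε₀, hε₀, hball⟩ := hev
    obtain ⟨a, ha1, ha2⟩ := exists_rat_btwn hmid2
    obtain ⟨ε, hε1, hε2⟩ := exists_rat_btwn hε₀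
    refine ⟨a, by linarith, ha2, ε, hε1, ?_⟩
    intro q hq1 hq2
    exact le_of_lt (lt_of_lt_of_le (hball ⟨hq1, lt_trans hq2 hε2⟩) ha1.le)
  · rintro ⟨a, ha0, hac, ε, hε, hq⟩
    have hev : ∀ᶠ r in nhdsWithin 0 (Set.Ioi (0:ℝ)), varBall g x r ≤ (a:ℝ) := by
      rw [(nhdsGT_basis_of_exists_gt ⟨1, one_pos⟩).eventually_iff]
      exact ⟨ε, hε, fun r hr => varBall_le_of_rat hM0 hg ha0 hq hr.1 hr.2⟩
    exact lt_of_le_of_lt (lipUp_le hev) hac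

lemma lowerSemicontinuous_varBall {g : X → ℝ} {M : ℝ} (hM0 : 0 ≤ M)
    (hg : ∀ y z, |g y - g z| ≤ M * dist y z) {r : ℝ} (hr : 0 < r) :
    LowerSemicontinuous (fun x : X => varBall g x r) := by
  intro x₀ t ht
  have hne : ((fun y => |g y - g x₀| / r) '' Metric.ball x₀ r).Nonempty :=
    ⟨|g x₀ - g x₀| / r, ⟨x₀, mem_ball_self hr, rfl⟩⟩
  obtain ⟨v, hv, htv⟩ := exists_lt_of_lt_csSup hne ht
  obtain ⟨y, hy, rfl⟩ := hv
  have hg_cont : Continuous g := by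
    have : LipschitzWith M.toNNReal g := by
      apply LipschitzWith.of_dist_le_mul
      intro a b
      rw [Real.dist_eq, Real.coe_toNNReal M hM0]
      exact hg a b
    exact this.continuous
  have hU : IsOpen {x : X | dist y x < r ∧ t < |g y - g x| / r} := by
    apply IsOpen.and
    · exact isOpen_lt (continuous_const.dist continuous_id) continuous_const
    · exact isOpen_lt continuous_const (((continuous_const.sub hg_cont).abs).div_const r)
  have hmem : x₀ ∈ {x : X | dist y x < r ∧ t < |g y - g x| / r} :=
    ⟨Metric.mem_ball.mp hy, htv⟩
  filter_upwards [hU.mem_nhds hmem] with x hx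
  exact lt_of_lt_of_le hx.2 (le_varBall hM0 hg (Metric.mem_ball.mpr hx.1))

lemma measurableSet_lipUp_lt [MeasurableSpace X] [BorelSpace X]
    {g : X → ℝ} {M : ℝ} (hM0 : 0 ≤ M)
    (hg : ∀ y z, |g y - g z| ≤ M * dist y z) (c : ℝ) :
    MeasurableSet {x : X | lipUp g x < c} := by
  have hset : {x : X | lipUp g x < c} =
      ⋃ a : ℚ, ⋃ ε : ℚ, ⋂ q : ℚ,
        {x : X | 0 ≤ (a:ℝ) ∧ (a:ℝ) < c ∧ 0 < (ε:ℝ) ∧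
          ((0 < (q:ℝ) ∧ (q:ℝ) < (ε:ℝ)) → varBall g x (q:ℝ) ≤ (a:ℝ))} := by
    ext x
    simp only [mem_setOf_eq, mem_iUnion, mem_iInter, lipUp_lt_iff hM0 hg x]
    constructor
    · rintro ⟨a, ha0, hac, ε, hε, hq⟩
      exact ⟨a, ε, fun q => ⟨ha0, hac, hε, fun hcond => hq q hcond.1 hcond.2⟩⟩
    · rintro ⟨a, ε, hq⟩
      obtain ⟨ha0, hac, hε, -⟩ := hq 1
      exact ⟨a, ha0, hac, ε, hε, fun q h1 h2 => (hq q).2.2.2 ⟨h1, h2⟩⟩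
  rw [hset]
  apply MeasurableSet.iUnion; intro a
  apply MeasurableSet.iUnion; intro ε
  apply MeasurableSet.iInter; intro q
  simp only [setOf_and]
  refine (MeasurableSet.const _).inter ((MeasurableSet.const _).inter
    ((MeasurableSet.const _).inter ?_))
  by_cases h4 : 0 < (q:ℝ) ∧ (q:ℝ) < (ε:ℝ)
  · simp only [h4, true_and, true_implies]
    exact measurableSet_le (lowerSemicontinuous_varBall hM0 hg h4.1).measurable
      measurable_const
  · simp only [h4, false_implies, setOf_true]
    exact MeasurableSet.univ

lemma varBall_add_le {g h : X → ℝ} {Mg Mh : ℝ} (hMg0 : 0 ≤ Mg)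
    (hgb : ∀ y z, |g y - g z| ≤ Mg * dist y z) (hMh0 : 0 ≤ Mh)
    (hhb : ∀ y z, |h y - h z| ≤ Mh * dist y z) (x : X) (r : ℝ) :
    varBall (fun y => g y + h y) x r ≤ varBall g x r + Mh := by
  apply Real.sSup_le _ (add_nonneg (varBall_nonneg g x r) hMh0)
  rintro v ⟨y, hy, rfl⟩
  have hd := Metric.mem_ball.mp hy
  have hr : 0 < r := lt_of_le_of_lt dist_nonneg hd
  have h1 : |g y + h y - (g x + h x)| ≤ |g y - g x| + |h y - h x| := by
    have h2 := abs_add_le (g y - g x) (h y - h x)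
    have h3 : g y - g x + (h y - h x) = g y + h y - (g x + h x) := by ring
    rwa [h3] at h2
  calc |g y + h y - (g x + h x)| / r ≤ (|g y - g x| + |h y - h x|) / r := by gcongr
    _ = |g y - g x| / r + |h y - h x| / r := add_div _ _ _
    _ ≤ varBall g x r + Mh := by
        refine add_le_add (le_varBall hMg0 hgb hy) ?_
        rw [div_le_iff₀ hr]
        calc |h y - h x| ≤ Mh * dist y x := hhb y x
          _ ≤ Mh * r := mul_le_mul_of_nonneg_left hd.le hMh0

lemma lipUp_add_le {g h : X → ℝ} {Mg Mh : ℝ} (hMg0 : 0 ≤ Mg)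
    (hgb : ∀ y z, |g y - g z| ≤ Mg * dist y z) (hMh0 : 0 ≤ Mh)
    (hhb : ∀ y z, |h y - h z| ≤ Mh * dist y z) (x : X) :
    lipUp (fun y => g y + h y) x ≤ lipUp g x + Mh := by
  refine le_of_forall_pos_le_add fun ε hε => ?_
  have hev : ∀ᶠ r in nhdsWithin 0 (Set.Ioi (0:ℝ)), varBall g x r < lipUp g x + ε :=
    eventually_lt_of_limsup_lt (lt_add_of_pos_right _ hε) (lipUp_bdd hMg0 hgb x)
  apply lipUp_le
  filter_upwards [hev] with r hr
  calc varBall (fun y => g y + h y) x r ≤ varBall g x r + Mh :=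
        varBall_add_le hMg0 hgb hMh0 hhb x r
    _ ≤ lipUp g x + Mh + ε := by linarith

lemma varBall_smul_le {g : X → ℝ} {M c : ℝ} (hM0 : 0 ≤ M)
    (hg : ∀ y z, |g y - g z| ≤ M * dist y z) (hc : 0 ≤ c) (x : X) (r : ℝ) :
    varBall (fun y => c * g y) x r ≤ c * varBall g x r := by
  apply Real.sSup_le _ (mul_nonneg hc (varBall_nonneg g x r))
  rintro v ⟨y, hy, rfl⟩
  have heq : |c * g y - c * g x| = c * |g y - g x| := by
    rw [← mul_sub, abs_mul, abs_of_nonneg hc]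
  show |c * g y - c * g x| / r ≤ c * varBall g x r
  rw [heq, mul_div_assoc]
  exact mul_le_mul_of_nonneg_left (le_varBall hM0 hg hy) hc

lemma lipUp_smul_zero {g : X → ℝ} {M c : ℝ} (hM0 : 0 ≤ M)
    (hg : ∀ y z, |g y - g z| ≤ M * dist y z) (hc : 0 ≤ c) (x : X)
    (h0 : lipUp g x = 0) : lipUp (fun y => c * g y) x = 0 := by
  have hcg : ∀ y z, |c * g y - c * g z| ≤ (c * M) * dist y z := by
    intro y z
    rw [← mul_sub, abs_mul, abs_of_nonneg hc, mul_assoc]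
    exact mul_le_mul_of_nonneg_left (hg y z) hc
  refine le_antisymm ?_ (lipUp_nonneg (mul_nonneg hc hM0) hcg x)
  rcases eq_or_lt_of_le hc with hc0 | hc0
  · apply lipUp_le
    apply Eventually.of_forall
    intro r
    calc varBall (fun y => c * g y) x r ≤ c * M := varBall_le (mul_nonneg hc hM0) hcg x r
      _ = 0 := by rw [← hc0, zero_mul]
  · refine le_of_forall_pos_le_add fun ε hε => ?_
    have hev : ∀ᶠ r in nhdsWithin 0 (Set.Ioi (0:ℝ)), varBall g x r < ε / c := by
      apply eventually_lt_of_limsup_lt _ (lipUp_bdd hM0 hg x)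
      rw [lipUp] at h0
      rw [h0]
      positivity
    rw [zero_add]
    apply lipUp_le
    filter_upwards [hev] with r hr
    calc varBall (fun y => c * g y) x r ≤ c * varBall g x r :=
          varBall_smul_le hM0 hg hc x r
      _ ≤ c * (ε / c) := mul_le_mul_of_nonneg_left hr.le hc
      _ = ε := by field_simp

end Aux


/-- Lemma 4.4: for an `N`-tuple `xs` of Lipschitz functions, the set
`Ind(xs)` of points where `xs` is not dependent to first order is measurable. -/
theorem ind_measurable
    (X : Type*) [MetricSpace X] [MeasurableSpace X] [BorelSpace X]
    (μ : Measure X) (N : ℕ) (xs : Fin N → X → ℝ) (hxs : ∀ k, IsLip (xs k)) :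
    MeasurableSet {x : X | ¬ DependentAt xs x} := by
  classical
  choose K hK using hxs
  set C : ℝ := ∑ i, (K i : ℝ) with hC
  have hC0 : 0 ≤ C := Finset.sum_nonneg fun i _ => (K i).coe_nonneg
  -- the bound on linear combinations
  have hGb : ∀ l : Fin N → ℝ, ∀ y z,
      |(∑ i, l i * xs i y) - (∑ i, l i * xs i z)| ≤ (‖l‖ * C) * dist y z := by
    intro l y z
    have h1 : (∑ i, l i * xs i y) - (∑ i, l i * xs i z)
        = ∑ i, l i * (xs i y - xs i z) := by
      rw [← Finset.sum_sub_distrib]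
      congr 1; funext i; ring
    rw [h1]
    calc |∑ i, l i * (xs i y - xs i z)| ≤ ∑ i, |l i * (xs i y - xs i z)| :=
          Finset.abs_sum_le_sum_abs _ _
      _ ≤ ∑ i, ‖l‖ * ((K i : ℝ) * dist y z) := by
          apply Finset.sum_le_sum
          intro i _
          rw [abs_mul]
          have hli : |l i| ≤ ‖l‖ := by
            have := norm_le_pi_norm l i
            rwa [Real.norm_eq_abs] at this
          have hxi : |xs i y - xs i z| ≤ (K i : ℝ) * dist y z := by
            have := (hK i).dist_le_mul y z
            rwa [Real.dist_eq] at this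
          exact mul_le_mul hli hxi (abs_nonneg _) (norm_nonneg _)
      _ = (‖l‖ * C) * dist y z := by
          rw [← Finset.mul_sum, ← Finset.sum_mul, hC]; ring
  have hGnn : ∀ l : Fin N → ℝ, 0 ≤ ‖l‖ * C := fun l => mul_nonneg (norm_nonneg l) hC0
  -- subadditivity in l
  have hsub : ∀ (x : X) (l m : Fin N → ℝ),
      lipUp (fun y => ∑ i, l i * xs i y) x ≤
        lipUp (fun y => ∑ i, m i * xs i y) x + ‖l - m‖ * C := by
    intro x l m
    have hfun : (fun y => ∑ i, l i * xs i y)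
        = (fun y => (∑ i, m i * xs i y) + ∑ i, (l - m) i * xs i y) := by
      funext y
      simp only [Pi.sub_apply, sub_mul, Finset.sum_sub_distrib]
      ring
    rw [hfun]
    exact lipUp_add_le (hGnn m) (hGb m) (hGnn (l - m)) (hGb (l - m)) x
  have hnn : ∀ (x : X) (l : Fin N → ℝ), 0 ≤ lipUp (fun y => ∑ i, l i * xs i y) x :=
    fun x l => lipUp_nonneg (hGnn l) (hGb l) x
  -- homogeneity
  have hsmul : ∀ (x : X) (l : Fin N → ℝ) (c : ℝ), 0 ≤ c →
      lipUp (fun y => ∑ i, l i * xs i y) x = 0 →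
      lipUp (fun y => ∑ i, (c • l) i * xs i y) x = 0 := by
    intro x l c hc h0
    have hfun : (fun y => ∑ i, (c • l) i * xs i y)
        = fun y => c * ∑ i, l i * xs i y := by
      funext y
      rw [Finset.mul_sum]
      congr 1; funext i
      simp [Pi.smul_apply, smul_eq_mul]; ring
    rw [hfun]
    exact lipUp_smul_zero (hGnn l) (hGb l) hc x h0
  -- countable dense subset of the sphere
  obtain ⟨D₀, hD₀c, hD₀d⟩ :=
    TopologicalSpace.exists_countable_dense (Metric.sphere (0 : Fin N → ℝ) 1)
  set D : Set (Fin N → ℝ) := Subtype.val '' D₀ with hD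
  have hDc : D.Countable := hD₀c.image _
  have hDs : D ⊆ Metric.sphere (0 : Fin N → ℝ) 1 := by
    rintro _ ⟨⟨l, hl⟩, -, rfl⟩; exact hl
  have hDd : ∀ l ∈ Metric.sphere (0 : Fin N → ℝ) 1, ∀ δ > (0:ℝ),
      ∃ m ∈ D, dist m l < δ := by
    intro l hl δ hδ
    have hmem := hD₀d ⟨l, hl⟩
    rw [Metric.mem_closure_iff] at hmem
    obtain ⟨m, hm, hdist⟩ := hmem δ hδ
    refine ⟨m.1, ⟨m, hm, rfl⟩, ?_⟩
    rw [Subtype.dist_eq] at hdist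
    rw [dist_comm]
    exact hdist
  -- main identity
  have key : {x : X | DependentAt xs x} =
      ⋂ m : ℕ, ⋃ l ∈ D, {x : X | lipUp (fun y => ∑ i, l i * xs i y) x < 1/((m:ℝ)+1)} := by
    ext x
    simp only [mem_setOf_eq, mem_iInter, mem_iUnion, exists_prop, DependentAt]
    constructor
    · rintro ⟨l₀, hl₀, hlip⟩
      intro m
      have hn0 : ‖l₀‖ ≠ 0 := norm_ne_zero_iff.mpr hl₀
      have hl's : ‖l₀‖⁻¹ • l₀ ∈ Metric.sphere (0 : Fin N → ℝ) 1 := by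
        simp [norm_smul, abs_of_nonneg (inv_nonneg.mpr (norm_nonneg l₀)),
          inv_mul_cancel₀ hn0]
      have hFl' : lipUp (fun y => ∑ i, (‖l₀‖⁻¹ • l₀) i * xs i y) x = 0 :=
        hsmul x l₀ _ (inv_nonneg.mpr (norm_nonneg _)) hlip
      obtain ⟨l, hlD, hdist⟩ := hDd _ hl's (1/(((m:ℝ)+1)*(C+1))) (by positivity)
      refine ⟨l, hlD, ?_⟩
      have hle := hsub x l (‖l₀‖⁻¹ • l₀)
      rw [hFl', zero_add] at hle
      have hnorm : ‖l - ‖l₀‖⁻¹ • l₀‖ = dist l (‖l₀‖⁻¹ • l₀) := (dist_eq_norm _ _).symm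
      have hm1 : (0:ℝ) < (m:ℝ) + 1 := by positivity
      calc lipUp (fun y => ∑ i, l i * xs i y) x ≤ ‖l - ‖l₀‖⁻¹ • l₀‖ * C := hle
        _ ≤ ‖l - ‖l₀‖⁻¹ • l₀‖ * (C+1) := by
            apply mul_le_mul_of_nonneg_left (by linarith) (norm_nonneg _)
        _ < (1/(((m:ℝ)+1)*(C+1))) * (C+1) := by
            apply mul_lt_mul_of_pos_right _ (by linarith)
            rw [hnorm]; exact hdist
        _ = 1/((m:ℝ)+1) := by field_simp
    · intro h
      choose l hlD hlF using h
      have hls : ∀ m, l m ∈ Metric.sphere (0 : Fin N → ℝ) 1 := fun m => hDs (hlD m)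
      obtain ⟨lst, hlsts, φ, hφ, htend⟩ :=
        (isCompact_sphere (0 : Fin N → ℝ) 1).tendsto_subseq hls
      refine ⟨lst, ?_, ?_⟩
      · intro h0
        rw [h0, Metric.mem_sphere, dist_self] at hlsts
        exact zero_ne_one hlsts
      · refine le_antisymm ?_ (hnn x lst)
        refine le_of_forall_pos_le_add fun ε hε => ?_
        rw [zero_add]
        -- choose m large
        have hεC : (0:ℝ) < ε/(2*(C+1)) := by positivity
        obtain ⟨m₀, hm₀⟩ := (Metric.tendsto_atTop.mp htend) _ hεC
        obtain ⟨m₁, hm₁⟩ := exists_nat_one_div_lt (show (0:ℝ) < ε/2 by positivity)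
        set m := max m₀ m₁ with hm
        have h1 := hm₀ m (le_max_left _ _)
        simp only [Function.comp_apply] at h1
        have hφm : m ≤ φ m := hφ.le_apply
        have h2 : 1/((φ m : ℝ)+1) < ε/2 := by
          have hle1 : 1/((φ m : ℝ)+1) ≤ 1/((m₁:ℝ)+1) := by
            apply one_div_le_one_div_of_le (by positivity)
            have : (m₁ : ℝ) ≤ (φ m : ℝ) := by
              exact_mod_cast le_trans (le_max_right m₀ m₁) hφm
            linarith
          exact lt_of_le_of_lt hle1 hm₁
        have hle := hsub x lst (l (φ m))
        have hdd : ‖lst - l (φ m)‖ = dist (l (φ m)) lst := by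
          rw [dist_comm, dist_eq_norm]
        calc lipUp (fun y => ∑ i, lst i * xs i y) x
            ≤ lipUp (fun y => ∑ i, l (φ m) i * xs i y) x + ‖lst - l (φ m)‖ * C := hle
          _ ≤ 1/((φ m : ℝ)+1) + (ε/(2*(C+1))) * C := by
              apply add_le_add (hlF (φ m)).le
              rw [hdd]
              apply mul_le_mul_of_nonneg_right h1.le hC0
          _ ≤ ε/2 + ε/2 := by
              apply add_le_add h2.le
              rw [div_mul_eq_mul_div, div_le_div_iff₀ (by positivity) (by norm_num)]
              nlinarith
          _ = ε := by ring
  have hcompl : {x : X | ¬ DependentAt xs x} = {x : X | DependentAt xs x}ᶜ := rfl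
  rw [hcompl, key]
  apply MeasurableSet.compl
  apply MeasurableSet.iInter
  intro m
  apply MeasurableSet.biUnion hDc
  intro l _
  exact measurableSet_lipUp_lt (hGnn l) (hGb l) _
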